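/- arXiv:1211.5757 — 4 statements merged into one kernel-verified Lean document; each statement's English description precedes it below -/
import Mathlib

section
/- (Theorem 1, first direction) For every point (f, α, β) of the polytope Q_p there exists a vector w = (w_{j,b})_{j∈J, b∈B_j} such that (f, w) lies in the polytope Q_f. -/
attribute [local instance] Classical.propDecidable

noncomputable section

variable {R : Type*}

/-- `ξ(r) ∈ ℝ^{q−1}`, indexed by the nonzero ring elements. -/
def xi [Ring R] (r : R) : {ρ : R // ρ ≠ 0} → ℝ :=
  fun ρ => if (ρ : R) = r then 1 else 0

/-- `I_j`, the support of the `j`-th row of `H`. -/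
abbrev Isupp [Ring R] {m n : ℕ} (H : Matrix (Fin m) (Fin n) R) (j : Fin m) :=
  {i : Fin n // H j i ≠ 0}

/-- `J_i`, the support of the `i`-th column of `H`. -/
abbrev Jsupp [Ring R] {m n : ℕ} (H : Matrix (Fin m) (Fin n) R) (i : Fin n) :=
  {j : Fin m // H j i ≠ 0}

/-- The local single parity-check code `B_j = {(b_i)_{i∈I_j} : ∑_{i∈I_j} b_i·H_{j,i} = 0}`. -/
abbrev Bcode [Ring R] [Fintype R] {m n : ℕ} (H : Matrix (Fin m) (Fin n) R) (j : Fin m) :=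
  {b : Isupp H j → R // (∑ i, b i * H j i.val) = 0}

/-- The repetition code `A_i` of constant tuples indexed by `{0} ∪ J_i`. -/
abbrev Acode [Ring R] {m n : ℕ} (H : Matrix (Fin m) (Fin n) R) (i : Fin n) :=
  {a : Option (Jsupp H i) → R // ∀ k k', a k = a k'}

/-- (Theorem 1, first direction) For every point `(f, α, β)` of the polytope `Q_p`
there exists `w` such that `(f, w)` lies in the polytope `Q_f`. -/
theorem Qp_subset_Qf [Ring R] [Fintype R] [DecidableEq R] {m n : ℕ}
    (H : Matrix (Fin m) (Fin n) R)
    (f : Fin n → {ρ : R // ρ ≠ 0} → ℝ)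
    (α : (i : Fin n) → Acode H i → ℝ)
    (β : (j : Fin m) → Bcode H j → ℝ)
    (hα0 : ∀ i a, 0 ≤ α i a)
    (hα1 : ∀ i, ∑ a, α i a = 1)
    (hβ0 : ∀ j b, 0 ≤ β j b)
    (hβ1 : ∀ j, ∑ b, β j b = 1)
    -- `f_i = u_{i,0}` where `u_i = ∑_{a∈A_i} α_{i,a}·Ξ(a)`
    (hf : ∀ (i : Fin n) (ρ : {ρ : R // ρ ≠ 0}),
      f i ρ = ∑ a : Acode H i, α i a * xi (a.val none) ρ)
    -- `u_{i,j} = v_{j,i}` where `v_j = ∑_{b∈B_j} β_{j,b}·Ξ(b)`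
    (huv : ∀ (j : Fin m) (i : Fin n) (hij : H j i ≠ 0) (ρ : {ρ : R // ρ ≠ 0}),
      (∑ a : Acode H i, α i a * xi (a.val (some ⟨j, hij⟩)) ρ)
        = ∑ b : Bcode H j, β j b * xi (b.val ⟨i, hij⟩) ρ) :
    ∃ w : (j : Fin m) → Bcode H j → ℝ,
      (∀ j b, 0 ≤ w j b) ∧
      (∀ j, ∑ b, w j b = 1) ∧
      (∀ (j : Fin m) (i : Fin n) (hij : H j i ≠ 0) (ρ : {ρ : R // ρ ≠ 0}),
        f i ρ = ∑ b ∈ Finset.univ.filter (fun b : Bcode H j => b.val ⟨i, hij⟩ = (ρ : R)),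
          w j b) := by
  refine ⟨β, hβ0, hβ1, ?_⟩
  intro j i hij ρ
  have h1 : f i ρ = ∑ b : Bcode H j, β j b * xi (b.val ⟨i, hij⟩) ρ := by
    rw [hf, ← huv j i hij ρ]
    exact Finset.sum_congr rfl fun a _ => by rw [a.prop none (some ⟨j, hij⟩)]
  rw [h1, Finset.sum_filter]
  refine Finset.sum_congr rfl fun b _ => ?_
  unfold xi
  by_cases h : (ρ : R) = b.val ⟨i, hij⟩ <;> simp [h, eq_comm (a := b.val ⟨i, hij⟩)]
end
end

section
/- (Lemma 1) The function ĥ : ℝ → ℝ attains its maximum at a unique point x*, and this point is given by x* = (1/2)·((V̄ − V) − (C̄ − C)). -/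
attribute [local instance] Classical.propDecidable

noncomputable section

variable {R : Type*}

/-- The soft-minimum `min^{(κ)}_l z_l = −(1/κ)·log(∑_l exp(−κ z_l))` of a finite family. -/
def softmin (κ : ℝ) {L : Type*} [Fintype L] (z : L → ℝ) : ℝ :=
  -(1 / κ) * Real.log (∑ l, Real.exp (-κ * z l))

/-- The inner product `⟨u, Ξ(c)⟩` of a block vector `u` with `Ξ` of a tuple `c`. -/
def ipXi [Ring R] [Fintype R] {ι : Type*} [Fintype ι] (u : ι → {ρ : R // ρ ≠ 0} → ℝ) (c : ι → R) : ℝ :=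
  ∑ k, ∑ ρ, u k ρ * xi (c k) ρ

/-- The inner product `⟨u, Ξ(c)⟩` where the block/entry at position `k0` is omitted. -/
def ipXiE [Ring R] [Fintype R] {ι : Type*} [Fintype ι] [DecidableEq ι]
    (u : ι → {ρ : R // ρ ≠ 0} → ℝ) (c : ι → R) (k0 : ι) : ℝ :=
  ∑ k ∈ Finset.univ.erase k0, ∑ ρ, u k ρ * xi (c k) ρ

/-- The block vector `û_i` in which the single coordinate `û_{i,j}^{(r)}` is replaced by `x`. -/
def uX [Ring R] {m n : ℕ} {H : Matrix (Fin m) (Fin n) R} {i : Fin n}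
    (uh : Option (Jsupp H i) → {ρ : R // ρ ≠ 0} → ℝ) (jh : Jsupp H i) (r : R) (x : ℝ) :
    Option (Jsupp H i) → {ρ : R // ρ ≠ 0} → ℝ :=
  fun k ρ => if k = some jh ∧ (ρ : R) = r then x else uh k ρ

/-- The block vector `v̂_j` in which the single coordinate `v̂_{j,i}^{(r)}` is replaced by `−x`. -/
def vX [Ring R] {m n : ℕ} {H : Matrix (Fin m) (Fin n) R} {j : Fin m}
    (vh : Isupp H j → {ρ : R // ρ ≠ 0} → ℝ) (ih : Isupp H j) (r : R) (x : ℝ) :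
    Isupp H j → {ρ : R // ρ ≠ 0} → ℝ :=
  fun k ρ => if k = ih ∧ (ρ : R) = r then -x else vh k ρ

/-- `ĥ(x) = min^{(κ)}_{a∈A_i} ⟨−û_i, Ξ(a)⟩ + min^{(κ)}_{b∈B_j} ⟨−v̂_j, Ξ(b)⟩`, as a function of
the single coordinate `x = û_{i,j}^{(r)}` (with `v̂_{j,i}^{(r)} = −x`, all other entries fixed). -/
def hhat [Ring R] [Fintype R] {m n : ℕ} (H : Matrix (Fin m) (Fin n) R)
    (j : Fin m) (i : Fin n) (hij : H j i ≠ 0) (r : R) (κ : ℝ)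
    (uh : Option (Jsupp H i) → {ρ : R // ρ ≠ 0} → ℝ)
    (vh : Isupp H j → {ρ : R // ρ ≠ 0} → ℝ) (x : ℝ) : ℝ :=
  softmin κ (fun a : Acode H i => ipXi (fun k ρ => -(uX uh ⟨j, hij⟩ r x k ρ)) a.val)
    + softmin κ (fun b : Bcode H j => ipXi (fun k ρ => -(vX vh ⟨i, hij⟩ r x k ρ)) b.val)

/-- `V̄ = −min^{(κ)}_{a∈A_i, a_j≠r} ⟨−û_i, Ξ(a)⟩` (independent of the coordinate `x`). -/
def Vbar [Ring R] [Fintype R] {m n : ℕ} (H : Matrix (Fin m) (Fin n) R)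
    (j : Fin m) (i : Fin n) (hij : H j i ≠ 0) (r : R) (κ : ℝ)
    (uh : Option (Jsupp H i) → {ρ : R // ρ ≠ 0} → ℝ) : ℝ :=
  -(softmin κ (fun a : {a : Acode H i // a.val (some ⟨j, hij⟩) ≠ r} =>
      ipXi (fun k ρ => -(uh k ρ)) a.val.val))

/-- `V = −min^{(κ)}_{a∈A_i, a_j=r} ⟨−ũ_i, Ξ(ã)⟩`, the `j`-th block/entry being omitted. -/
def Vsm [Ring R] [Fintype R] {m n : ℕ} (H : Matrix (Fin m) (Fin n) R)
    (j : Fin m) (i : Fin n) (hij : H j i ≠ 0) (r : R) (κ : ℝ)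
    (uh : Option (Jsupp H i) → {ρ : R // ρ ≠ 0} → ℝ) : ℝ :=
  -(softmin κ (fun a : {a : Acode H i // a.val (some ⟨j, hij⟩) = r} =>
      ipXiE (fun k ρ => -(uh k ρ)) a.val.val (some ⟨j, hij⟩)))

/-- `C̄ = −min^{(κ)}_{b∈B_j, b_i≠r} ⟨−v̂_j, Ξ(b)⟩` (independent of the coordinate `x`). -/
def Cbar [Ring R] [Fintype R] {m n : ℕ} (H : Matrix (Fin m) (Fin n) R)
    (j : Fin m) (i : Fin n) (hij : H j i ≠ 0) (r : R) (κ : ℝ)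
    (vh : Isupp H j → {ρ : R // ρ ≠ 0} → ℝ) : ℝ :=
  -(softmin κ (fun b : {b : Bcode H j // b.val ⟨i, hij⟩ ≠ r} =>
      ipXi (fun k ρ => -(vh k ρ)) b.val.val))

/-- `C = −min^{(κ)}_{b∈B_j, b_i=r} ⟨−ṽ_j, Ξ(b̃)⟩`, the `i`-th block/entry being omitted. -/
def Csm [Ring R] [Fintype R] {m n : ℕ} (H : Matrix (Fin m) (Fin n) R)
    (j : Fin m) (i : Fin n) (hij : H j i ≠ 0) (r : R) (κ : ℝ)
    (vh : Isupp H j → {ρ : R // ρ ≠ 0} → ℝ) : ℝ :=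
  -(softmin κ (fun b : {b : Bcode H j // b.val ⟨i, hij⟩ = r} =>
      ipXiE (fun k ρ => -(vh k ρ)) b.val.val ⟨i, hij⟩))

lemma key_min (κ A B D E : ℝ) (hκ : 0 < κ) (hA : 0 < A) (hB : 0 < B) (hD : 0 < D) (hE : 0 < E)
    (f : ℝ → ℝ)
    (hf : ∀ x, f x = -(1/κ) * Real.log (A + B * Real.exp (κ*x))
        + -(1/κ) * Real.log (D + E * Real.exp (-(κ*x))))
    (xs : ℝ)
    (hxs : xs = (1/(2*κ)) * ((Real.log A - Real.log B) - (Real.log D - Real.log E))) :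
    (∀ y, f y ≤ f xs) ∧ ∀ y, (∀ z, f z ≤ f y) → y = xs := by
  have hκ' : κ ≠ 0 := ne_of_gt hκ
  set s : ℝ := Real.exp (κ * xs) with hs
  have hspos : 0 < s := Real.exp_pos _
  have hs2 : B * D * (s * s) = A * E := by
    have h2 : s * s = Real.exp (Real.log (A * E) - Real.log (B * D)) := by
      rw [← Real.exp_add, hxs]
      congr 1
      rw [Real.log_mul (ne_of_gt hA) (ne_of_gt hE), Real.log_mul (ne_of_gt hB) (ne_of_gt hD)]
      field_simp
      ring
    rw [h2, Real.exp_sub, Real.exp_log (by positivity), Real.exp_log (by positivity)]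
    field_simp
  set g : ℝ → ℝ := fun t => A*D + A*E/t + B*D*t + B*E with hg
  have gpos : ∀ t, 0 < t → 0 < g t := by
    intro t ht; have : 0 < A*E/t := by positivity
    simp only [hg]; positivity
  have hfg : ∀ x, f x = -(1/κ) * Real.log (g (Real.exp (κ*x))) := by
    intro x
    rw [hf x]
    have he : 0 < Real.exp (κ*x) := Real.exp_pos _
    have h1 : (A + B * Real.exp (κ*x)) * (D + E * Real.exp (-(κ*x))) = g (Real.exp (κ*x)) := by
      rw [Real.exp_neg]
      simp only [hg]
      field_simp
      ring
    have hP : 0 < A + B * Real.exp (κ*x) := by positivity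
    have hQ : 0 < D + E * Real.exp (-(κ*x)) := by positivity
    have hlog : Real.log (A + B * Real.exp (κ*x)) + Real.log (D + E * Real.exp (-(κ*x)))
        = Real.log (g (Real.exp (κ*x))) := by
      rw [← Real.log_mul (ne_of_gt hP) (ne_of_gt hQ), h1]
    linear_combination (-(1/κ)) * hlog
  have hgs : ∀ t, 0 < t → g t = g s + B*D*(t-s)^2/t := by
    intro t ht
    simp only [hg]
    field_simp
    nlinarith [hs2, mul_pos ht hspos]
  have hmono : ∀ t, 0 < t → g s ≤ g t := by
    intro t ht; rw [hgs t ht]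
    have : 0 ≤ B*D*(t-s)^2/t := by positivity
    linarith
  have hstrict : ∀ t, 0 < t → g t = g s → t = s := by
    intro t ht hts
    rw [hgs t ht] at hts
    have h0 : B*D*(t-s)^2/t = 0 := by linarith
    have hsq : (t-s)^2 = 0 := by
      by_contra h
      have h2 : 0 < (t-s)^2 := lt_of_le_of_ne (sq_nonneg _) (Ne.symm h)
      have h3 : 0 < B*D*(t-s)^2/t := div_pos (mul_pos (mul_pos hB hD) h2) ht
      linarith
    have := pow_eq_zero_iff (two_ne_zero) |>.mp hsq
    linarith
  have hle : ∀ y, f y ≤ f xs := by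
    intro y
    rw [hfg y, hfg xs, ← hs]
    have h1 : Real.log (g s) ≤ Real.log (g (Real.exp (κ*y))) :=
      Real.log_le_log (gpos s hspos) (hmono _ (Real.exp_pos _))
    have h2 : 0 < 1/κ := by positivity
    have h3 := mul_le_mul_of_nonneg_left h1 (le_of_lt h2)
    linarith
  refine ⟨hle, ?_⟩
  intro y hy
  have h1 : f y = f xs := le_antisymm (hle y) (hy xs)
  rw [hfg y, hfg xs, ← hs] at h1
  have h2 : Real.log (g (Real.exp (κ*y))) = Real.log (g s) := by
    have hne : -(1/κ) ≠ 0 := by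
      simp [hκ']
    exact mul_left_cancel₀ hne h1
  have h3 : g (Real.exp (κ*y)) = g s := by
    have := Real.exp_log (gpos _ (Real.exp_pos (κ*y)))
    have := Real.exp_log (gpos s hspos)
    calc g (Real.exp (κ*y)) = Real.exp (Real.log (g (Real.exp (κ*y)))) :=
          (Real.exp_log (gpos _ (Real.exp_pos (κ*y)))).symm
      _ = Real.exp (Real.log (g s)) := by rw [h2]
      _ = g s := Real.exp_log (gpos s hspos)
  have h4 : Real.exp (κ*y) = s := hstrict _ (Real.exp_pos _) h3
  have h5 : κ*y = κ*xs := Real.exp_injective (by rw [h4, hs])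
  exact mul_left_cancel₀ hκ' h5


section Aux

variable [Ring R] [Fintype R] {m n : ℕ} {H : Matrix (Fin m) (Fin n) R}

lemma aux_evalA1 {j : Fin m} {i : Fin n} (hij : H j i ≠ 0) {r : R} (hr : r ≠ 0) (x : ℝ)
    (uh : Option (Jsupp H i) → {ρ : R // ρ ≠ 0} → ℝ)
    (a : Acode H i) (ha : a.val (some ⟨j, hij⟩) = r) :
    ipXi (fun k ρ => -(uX uh ⟨j, hij⟩ r x k ρ)) a.val
      = -x + ipXiE (fun k ρ => -(uh k ρ)) a.val (some ⟨j, hij⟩) := by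
  simp only [ipXi, ipXiE]
  rw [← Finset.add_sum_erase _ _ (Finset.mem_univ (some ⟨j, hij⟩))]
  congr 1
  · rw [ha]
    have hpt : ∀ ρ : {ρ : R // ρ ≠ 0},
        -(uX uh ⟨j, hij⟩ r x (some ⟨j, hij⟩) ρ) * xi r ρ
          = if ρ = (⟨r, hr⟩ : {ρ : R // ρ ≠ 0}) then -x else 0 := by
      intro ρ
      by_cases h : (ρ : R) = r
      · have hρ : ρ = (⟨r, hr⟩ : {ρ : R // ρ ≠ 0}) := Subtype.ext h
        simp [uX, xi, hρ]
      · have hρ : ρ ≠ (⟨r, hr⟩ : {ρ : R // ρ ≠ 0}) := fun hc => h (by rw [hc])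
        simp [uX, xi, h, hρ]
    rw [Finset.sum_congr rfl (fun ρ _ => hpt ρ)]
    simp
  · refine Finset.sum_congr rfl (fun k hk => Finset.sum_congr rfl (fun ρ _ => ?_))
    have hk' : k ≠ some ⟨j, hij⟩ := (Finset.mem_erase.mp hk).1
    simp [uX, hk']

lemma aux_evalA2 {j : Fin m} {i : Fin n} (hij : H j i ≠ 0) {r : R} (x : ℝ)
    (uh : Option (Jsupp H i) → {ρ : R // ρ ≠ 0} → ℝ)
    (a : Acode H i) (ha : a.val (some ⟨j, hij⟩) ≠ r) :
    ipXi (fun k ρ => -(uX uh ⟨j, hij⟩ r x k ρ)) a.val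
      = ipXi (fun k ρ => -(uh k ρ)) a.val := by
  simp only [ipXi]
  refine Finset.sum_congr rfl (fun k _ => Finset.sum_congr rfl (fun ρ _ => ?_))
  by_cases h : k = some ⟨j, hij⟩ ∧ (ρ : R) = r
  · have hak : a.val k ≠ r := by rw [a.2 k (some ⟨j, hij⟩)]; exact ha
    have hx : xi (a.val k) ρ = 0 := by
      have hne : (ρ : R) ≠ a.val k := by rw [h.2]; exact fun hc => hak hc.symm
      simp [xi, hne]
    simp [hx]
  · simp [uX, h]

lemma aux_evalB1 {j : Fin m} {i : Fin n} (hij : H j i ≠ 0) {r : R} (hr : r ≠ 0) (x : ℝ)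
    (vh : Isupp H j → {ρ : R // ρ ≠ 0} → ℝ)
    (b : Bcode H j) (hb : b.val ⟨i, hij⟩ = r) :
    ipXi (fun k ρ => -(vX vh ⟨i, hij⟩ r x k ρ)) b.val
      = x + ipXiE (fun k ρ => -(vh k ρ)) b.val ⟨i, hij⟩ := by
  simp only [ipXi, ipXiE]
  rw [← Finset.add_sum_erase _ _ (Finset.mem_univ (⟨i, hij⟩ : Isupp H j))]
  congr 1
  · rw [hb]
    have hpt : ∀ ρ : {ρ : R // ρ ≠ 0},
        -(vX vh ⟨i, hij⟩ r x ⟨i, hij⟩ ρ) * xi r ρ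
          = if ρ = (⟨r, hr⟩ : {ρ : R // ρ ≠ 0}) then x else 0 := by
      intro ρ
      by_cases h : (ρ : R) = r
      · have hρ : ρ = (⟨r, hr⟩ : {ρ : R // ρ ≠ 0}) := Subtype.ext h
        simp [vX, xi, hρ]
      · have hρ : ρ ≠ (⟨r, hr⟩ : {ρ : R // ρ ≠ 0}) := fun hc => h (by rw [hc])
        simp [vX, xi, h, hρ]
    rw [Finset.sum_congr rfl (fun ρ _ => hpt ρ)]
    simp
  · refine Finset.sum_congr rfl (fun k hk => Finset.sum_congr rfl (fun ρ _ => ?_))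
    have hk' : k ≠ (⟨i, hij⟩ : Isupp H j) := (Finset.mem_erase.mp hk).1
    simp [vX, hk']

lemma aux_evalB2 {j : Fin m} {i : Fin n} (hij : H j i ≠ 0) {r : R} (x : ℝ)
    (vh : Isupp H j → {ρ : R // ρ ≠ 0} → ℝ)
    (b : Bcode H j) (hb : b.val ⟨i, hij⟩ ≠ r) :
    ipXi (fun k ρ => -(vX vh ⟨i, hij⟩ r x k ρ)) b.val
      = ipXi (fun k ρ => -(vh k ρ)) b.val := by
  simp only [ipXi]
  refine Finset.sum_congr rfl (fun k _ => Finset.sum_congr rfl (fun ρ _ => ?_))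
  by_cases h : k = (⟨i, hij⟩ : Isupp H j) ∧ (ρ : R) = r
  · have hak : b.val k ≠ r := by rw [h.1]; exact hb
    have hx : xi (b.val k) ρ = 0 := by
      have hne : (ρ : R) ≠ b.val k := by rw [h.2]; exact fun hc => hak hc.symm
      simp [xi, hne]
    simp [hx]
  · simp [vX, h]

lemma aux_sumA {j : Fin m} {i : Fin n} (hij : H j i ≠ 0) {r : R} (hr : r ≠ 0)
    (κ : ℝ) (x : ℝ) (uh : Option (Jsupp H i) → {ρ : R // ρ ≠ 0} → ℝ) :
    (∑ a : Acode H i, Real.exp (-κ * ipXi (fun k ρ => -(uX uh ⟨j, hij⟩ r x k ρ)) a.val))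
      = (∑ a : {a : Acode H i // a.val (some ⟨j, hij⟩) ≠ r},
          Real.exp (-κ * ipXi (fun k ρ => -(uh k ρ)) a.val.val))
        + (∑ a : {a : Acode H i // a.val (some ⟨j, hij⟩) = r},
            Real.exp (-κ * ipXiE (fun k ρ => -(uh k ρ)) a.val.val (some ⟨j, hij⟩)))
          * Real.exp (κ * x) := by
  refine ((Fintype.sum_subtype_add_sum_subtype
      (fun a : Acode H i => a.val (some ⟨j, hij⟩) = r)
      (fun a => Real.exp (-κ * ipXi (fun k ρ => -(uX uh ⟨j, hij⟩ r x k ρ)) a.val))).symm).trans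
      ?_
  refine (add_comm _ _).trans (congrArg₂ (· + ·) ?_ ?_)
  · refine Fintype.sum_equiv (Equiv.subtypeEquivRight (fun a => Iff.rfl)) _ _ (fun a => ?_)
    show Real.exp (-κ * ipXi (fun k ρ => -(uX uh ⟨j, hij⟩ r x k ρ)) a.val.val)
        = Real.exp (-κ * ipXi (fun k ρ => -(uh k ρ)) a.val.val)
    rw [aux_evalA2 hij x uh a.val a.2]
  · rw [Finset.sum_mul]
    refine Fintype.sum_equiv (Equiv.refl _) _ _ (fun a => ?_)
    show Real.exp (-κ * ipXi (fun k ρ => -(uX uh ⟨j, hij⟩ r x k ρ)) a.val.val)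
        = Real.exp (-κ * ipXiE (fun k ρ => -(uh k ρ)) a.val.val (some ⟨j, hij⟩))
          * Real.exp (κ * x)
    rw [aux_evalA1 hij hr x uh a.val a.2, ← Real.exp_add]
    congr 1
    ring

lemma aux_sumB {j : Fin m} {i : Fin n} (hij : H j i ≠ 0) {r : R} (hr : r ≠ 0)
    (κ : ℝ) (x : ℝ) (vh : Isupp H j → {ρ : R // ρ ≠ 0} → ℝ) :
    (∑ b : Bcode H j, Real.exp (-κ * ipXi (fun k ρ => -(vX vh ⟨i, hij⟩ r x k ρ)) b.val))
      = (∑ b : {b : Bcode H j // b.val ⟨i, hij⟩ ≠ r},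
          Real.exp (-κ * ipXi (fun k ρ => -(vh k ρ)) b.val.val))
        + (∑ b : {b : Bcode H j // b.val ⟨i, hij⟩ = r},
            Real.exp (-κ * ipXiE (fun k ρ => -(vh k ρ)) b.val.val ⟨i, hij⟩))
          * Real.exp (-(κ * x)) := by
  refine ((Fintype.sum_subtype_add_sum_subtype
      (fun b : Bcode H j => b.val ⟨i, hij⟩ = r)
      (fun b => Real.exp (-κ * ipXi (fun k ρ => -(vX vh ⟨i, hij⟩ r x k ρ)) b.val))).symm).trans
      ?_
  refine (add_comm _ _).trans (congrArg₂ (· + ·) ?_ ?_)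
  · refine Fintype.sum_equiv (Equiv.subtypeEquivRight (fun b => Iff.rfl)) _ _ (fun b => ?_)
    show Real.exp (-κ * ipXi (fun k ρ => -(vX vh ⟨i, hij⟩ r x k ρ)) b.val.val)
        = Real.exp (-κ * ipXi (fun k ρ => -(vh k ρ)) b.val.val)
    rw [aux_evalB2 hij x vh b.val b.2]
  · rw [Finset.sum_mul]
    refine Fintype.sum_equiv (Equiv.refl _) _ _ (fun b => ?_)
    show Real.exp (-κ * ipXi (fun k ρ => -(vX vh ⟨i, hij⟩ r x k ρ)) b.val.val)
        = Real.exp (-κ * ipXiE (fun k ρ => -(vh k ρ)) b.val.val ⟨i, hij⟩)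
          * Real.exp (-(κ * x))
    rw [aux_evalB1 hij hr x vh b.val b.2, ← Real.exp_add]
    congr 1
    ring

set_option maxHeartbeats 1000000 in
lemma hhat_unique_max' {j : Fin m} {i : Fin n}
    (hij : H j i ≠ 0) (r : R) (hr : r ≠ 0)
    (κ : ℝ) (hκ : 0 < κ)
    (uh : Option (Jsupp H i) → {ρ : R // ρ ≠ 0} → ℝ)
    (vh : Isupp H j → {ρ : R // ρ ≠ 0} → ℝ)
    (hB1 : Nonempty {b : Bcode H j // b.val ⟨i, hij⟩ = r})
    (hB2 : Nonempty {b : Bcode H j // b.val ⟨i, hij⟩ ≠ r}) :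
    (∀ y : ℝ, hhat H j i hij r κ uh vh y
        ≤ hhat H j i hij r κ uh vh
            ((1 / 2) * ((Vbar H j i hij r κ uh - Vsm H j i hij r κ uh)
              - (Cbar H j i hij r κ vh - Csm H j i hij r κ vh)))) ∧
      (∀ y : ℝ, (∀ z : ℝ, hhat H j i hij r κ uh vh z ≤ hhat H j i hij r κ uh vh y) →
        y = (1 / 2) * ((Vbar H j i hij r κ uh - Vsm H j i hij r κ uh)
              - (Cbar H j i hij r κ vh - Csm H j i hij r κ vh))) := by
  haveI nA1 : Nonempty {a : Acode H i // a.val (some ⟨j, hij⟩) = r} :=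
    ⟨⟨⟨fun _ => r, fun _ _ => rfl⟩, rfl⟩⟩
  haveI nA2 : Nonempty {a : Acode H i // a.val (some ⟨j, hij⟩) ≠ r} :=
    ⟨⟨⟨fun _ => 0, fun _ _ => rfl⟩, Ne.symm hr⟩⟩
  haveI nB1 := hB1
  haveI nB2 := hB2
  set SA : ℝ := ∑ a : {a : Acode H i // a.val (some ⟨j, hij⟩) ≠ r},
      Real.exp (-κ * ipXi (fun k ρ => -(uh k ρ)) a.val.val) with hSA
  set SB : ℝ := ∑ a : {a : Acode H i // a.val (some ⟨j, hij⟩) = r},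
      Real.exp (-κ * ipXiE (fun k ρ => -(uh k ρ)) a.val.val (some ⟨j, hij⟩)) with hSB
  set SD : ℝ := ∑ b : {b : Bcode H j // b.val ⟨i, hij⟩ ≠ r},
      Real.exp (-κ * ipXi (fun k ρ => -(vh k ρ)) b.val.val) with hSD
  set SE : ℝ := ∑ b : {b : Bcode H j // b.val ⟨i, hij⟩ = r},
      Real.exp (-κ * ipXiE (fun k ρ => -(vh k ρ)) b.val.val ⟨i, hij⟩) with hSE
  have hSApos : 0 < SA := Finset.sum_pos (fun _ _ => Real.exp_pos _) Finset.univ_nonempty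
  have hSBpos : 0 < SB := Finset.sum_pos (fun _ _ => Real.exp_pos _) Finset.univ_nonempty
  have hSDpos : 0 < SD := Finset.sum_pos (fun _ _ => Real.exp_pos _) Finset.univ_nonempty
  have hSEpos : 0 < SE := Finset.sum_pos (fun _ _ => Real.exp_pos _) Finset.univ_nonempty
  have hf : ∀ x, hhat H j i hij r κ uh vh x
      = -(1/κ) * Real.log (SA + SB * Real.exp (κ*x))
        + -(1/κ) * Real.log (SD + SE * Real.exp (-(κ*x))) := by
    intro x
    simp only [hhat, softmin]
    rw [aux_sumA hij hr κ x uh, aux_sumB hij hr κ x vh, ← hSA, ← hSB, ← hSD, ← hSE]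
  have hVbar : Vbar H j i hij r κ uh = (1/κ) * Real.log SA := by
    simp only [Vbar, softmin]
    rw [← hSA]; ring
  have hVsm : Vsm H j i hij r κ uh = (1/κ) * Real.log SB := by
    simp only [Vsm, softmin]
    rw [← hSB]; ring
  have hCbar : Cbar H j i hij r κ vh = (1/κ) * Real.log SD := by
    simp only [Cbar, softmin]
    rw [← hSD]; ring
  have hCsm : Csm H j i hij r κ vh = (1/κ) * Real.log SE := by
    simp only [Csm, softmin]
    rw [← hSE]; ring
  have hxs : (1 / 2) * ((Vbar H j i hij r κ uh - Vsm H j i hij r κ uh)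
        - (Cbar H j i hij r κ vh - Csm H j i hij r κ vh))
      = (1/(2*κ)) * ((Real.log SA - Real.log SB) - (Real.log SD - Real.log SE)) := by
    rw [hVbar, hVsm, hCbar, hCsm]
    field_simp
  rw [hxs]
  exact key_min κ SA SB SD SE hκ hSApos hSBpos hSDpos hSEpos _ hf _ rfl

end Aux

/-- (Lemma 1) The function `ĥ : ℝ → ℝ` attains its maximum at a unique point `x*`, given by
`x* = (1/2)·((V̄ − V) − (C̄ − C))`. -/
theorem hhat_unique_max [Ring R] [Fintype R] [DecidableEq R]
    (hq : 2 ≤ Fintype.card R) {m n : ℕ} (H : Matrix (Fin m) (Fin n) R)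
    (j : Fin m) (i : Fin n) (hij : H j i ≠ 0) (r : R) (hr : r ≠ 0)
    (κ : ℝ) (hκ : 0 < κ)
    (uh : Option (Jsupp H i) → {ρ : R // ρ ≠ 0} → ℝ)
    (vh : Isupp H j → {ρ : R // ρ ≠ 0} → ℝ)
    (hcouple : ∀ ρ, uh (some ⟨j, hij⟩) ρ = -(vh ⟨i, hij⟩ ρ))
    (hB1 : Nonempty {b : Bcode H j // b.val ⟨i, hij⟩ = r})
    (hB2 : Nonempty {b : Bcode H j // b.val ⟨i, hij⟩ ≠ r}) :
    (∀ y : ℝ, hhat H j i hij r κ uh vh y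
        ≤ hhat H j i hij r κ uh vh
            ((1 / 2) * ((Vbar H j i hij r κ uh - Vsm H j i hij r κ uh)
              - (Cbar H j i hij r κ vh - Csm H j i hij r κ vh)))) ∧
      (∀ y : ℝ, (∀ z : ℝ, hhat H j i hij r κ uh vh z ≤ hhat H j i hij r κ uh vh y) →
        y = (1 / 2) * ((Vbar H j i hij r κ uh - Vsm H j i hij r κ uh)
              - (Cbar H j i hij r κ vh - Csm H j i hij r κ vh))) :=
  hhat_unique_max' hij r hr κ hκ uh vh hB1 hB2
end
end

section
/- For every κ > 0 and all reals V̄, V, C̄, C, the function f : ℝ → ℝ defined by f(x) = −(1/κ)·log(e^{κV̄} + e^{κ(V+x)}) − (1/κ)·log(e^{κC̄} + e^{κ(C−x)}) is strictly concave on ℝ and attains its maximum at the unique point x* = ((V̄ − V) − (C̄ − C))/2. -/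
/-- The scalar per-coordinate objective
`f(x) = −(1/κ)·log(e^{κV̄} + e^{κ(V+x)}) − (1/κ)·log(e^{κC̄} + e^{κ(C−x)})`. -/
noncomputable def scalarObj (κ Vb V Cb C : ℝ) (x : ℝ) : ℝ :=
  -(1 / κ) * Real.log (Real.exp (κ * Vb) + Real.exp (κ * (V + x)))
    - (1 / κ) * Real.log (Real.exp (κ * Cb) + Real.exp (κ * (C - x)))

private lemma exp_add_exp_ge (s t : ℝ) :
    2 * Real.exp ((s + t) / 2) ≤ Real.exp s + Real.exp t := by
  have h1 : Real.exp s = Real.exp (s / 2) * Real.exp (s / 2) := by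
    rw [← Real.exp_add]; ring_nf
  have h2 : Real.exp t = Real.exp (t / 2) * Real.exp (t / 2) := by
    rw [← Real.exp_add]; ring_nf
  have h3 : Real.exp ((s + t) / 2) = Real.exp (s / 2) * Real.exp (t / 2) := by
    rw [← Real.exp_add]; ring_nf
  nlinarith [sq_nonneg (Real.exp (s / 2) - Real.exp (t / 2))]

private lemma exp_add_exp_eq (s t : ℝ)
    (h : Real.exp s + Real.exp t = 2 * Real.exp ((s + t) / 2)) : s = t := by
  have h1 : Real.exp s = Real.exp (s / 2) * Real.exp (s / 2) := by
    rw [← Real.exp_add]; ring_nf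
  have h2 : Real.exp t = Real.exp (t / 2) * Real.exp (t / 2) := by
    rw [← Real.exp_add]; ring_nf
  have h3 : Real.exp ((s + t) / 2) = Real.exp (s / 2) * Real.exp (t / 2) := by
    rw [← Real.exp_add]; ring_nf
  have hq : Real.exp (s / 2) = Real.exp (t / 2) := by
    nlinarith [sq_nonneg (Real.exp (s / 2) - Real.exp (t / 2))]
  have := Real.exp_eq_exp.mp hq
  linarith

/-- For every κ > 0 and all reals V̄, V, C̄, C, the function `f` is strictly concave on ℝ and
attains its maximum at the unique point `x* = ((V̄ − V) − (C̄ − C))/2`. -/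
theorem scalarObj_strictConcave_and_unique_max (κ Vb V Cb C : ℝ) (hκ : 0 < κ) :
    StrictConcaveOn ℝ Set.univ (scalarObj κ Vb V Cb C) ∧
      (∀ y : ℝ, scalarObj κ Vb V Cb C y ≤ scalarObj κ Vb V Cb C (((Vb - V) - (Cb - C)) / 2)) ∧
      (∀ y : ℝ, (∀ z : ℝ, scalarObj κ Vb V Cb C z ≤ scalarObj κ Vb V Cb C y) →
        y = ((Vb - V) - (Cb - C)) / 2) := by
  have hκ' : κ ≠ 0 := hκ.ne'
  have hA : ∀ x : ℝ, (0 : ℝ) < Real.exp (κ * Vb) + Real.exp (κ * (V + x)) := fun x => by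
    positivity
  have hB : ∀ x : ℝ, (0 : ℝ) < Real.exp (κ * Cb) + Real.exp (κ * (C - x)) := fun x => by
    positivity
  -- first derivative
  have hd1 : ∀ x : ℝ, HasDerivAt (fun x : ℝ => κ * (V + x)) κ x := fun x => by
    simpa using ((hasDerivAt_id x).const_add V).const_mul κ
  have hd2 : ∀ x : ℝ, HasDerivAt (fun x : ℝ => κ * (C - x)) (-κ) x := fun x => by
    simpa using ((hasDerivAt_id x).const_sub C).const_mul κ
  have hA' : ∀ x : ℝ, HasDerivAt (fun x : ℝ => Real.exp (κ * Vb) + Real.exp (κ * (V + x)))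
      (Real.exp (κ * (V + x)) * κ) x := fun x => ((hd1 x).exp).const_add _
  have hB' : ∀ x : ℝ, HasDerivAt (fun x : ℝ => Real.exp (κ * Cb) + Real.exp (κ * (C - x)))
      (Real.exp (κ * (C - x)) * (-κ)) x := fun x => ((hd2 x).exp).const_add _
  have hf' : ∀ x : ℝ, HasDerivAt (scalarObj κ Vb V Cb C)
      (-(Real.exp (κ * (V + x)) / (Real.exp (κ * Vb) + Real.exp (κ * (V + x))))
        + Real.exp (κ * (C - x)) / (Real.exp (κ * Cb) + Real.exp (κ * (C - x)))) x := by
    intro x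
    have h1 := ((hA' x).log (hA x).ne').const_mul (-(1 / κ))
    have h2 := ((hB' x).log (hB x).ne').const_mul (1 / κ)
    have h := h1.sub h2
    convert h using 1
    · rfl
    · rfl
    · rfl
    field_simp
    ring
  set g : ℝ → ℝ := fun x =>
      -(Real.exp (κ * (V + x)) / (Real.exp (κ * Vb) + Real.exp (κ * (V + x))))
        + Real.exp (κ * (C - x)) / (Real.exp (κ * Cb) + Real.exp (κ * (C - x))) with hgdef
  have hderiv : deriv (scalarObj κ Vb V Cb C) = g := funext fun x => (hf' x).deriv
  have hg' : ∀ x : ℝ, HasDerivAt g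
      (-((Real.exp (κ * (V + x)) * κ * (Real.exp (κ * Vb) + Real.exp (κ * (V + x)))
            - Real.exp (κ * (V + x)) * (Real.exp (κ * (V + x)) * κ))
          / (Real.exp (κ * Vb) + Real.exp (κ * (V + x))) ^ 2)
        + (Real.exp (κ * (C - x)) * (-κ) * (Real.exp (κ * Cb) + Real.exp (κ * (C - x)))
            - Real.exp (κ * (C - x)) * (Real.exp (κ * (C - x)) * (-κ)))
          / (Real.exp (κ * Cb) + Real.exp (κ * (C - x))) ^ 2) x := by
    intro x
    exact (((hd1 x).exp.div (hA' x) (hA x).ne').neg).add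
      ((hd2 x).exp.div (hB' x) (hB x).ne')
  have hcont : Continuous (scalarObj κ Vb V Cb C) := by
    have c1 : Continuous fun x : ℝ => Real.log (Real.exp (κ * Vb) + Real.exp (κ * (V + x))) :=
      Continuous.log (by fun_prop) fun x => (hA x).ne'
    have c2 : Continuous fun x : ℝ => Real.log (Real.exp (κ * Cb) + Real.exp (κ * (C - x))) :=
      Continuous.log (by fun_prop) fun x => (hB x).ne'
    unfold scalarObj
    exact (continuous_const.mul c1).sub (continuous_const.mul c2)
  have hconc : StrictConcaveOn ℝ Set.univ (scalarObj κ Vb V Cb C) := by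
    apply strictConcaveOn_univ_of_deriv2_neg hcont
    intro x
    have h2 : deriv^[2] (scalarObj κ Vb V Cb C) x
        = deriv (deriv (scalarObj κ Vb V Cb C)) x := rfl
    rw [h2, hderiv, (hg' x).deriv]
    have e1 : Real.exp (κ * (V + x)) * κ * (Real.exp (κ * Vb) + Real.exp (κ * (V + x)))
        - Real.exp (κ * (V + x)) * (Real.exp (κ * (V + x)) * κ)
        = κ * (Real.exp (κ * (V + x)) * Real.exp (κ * Vb)) := by ring
    have e2 : Real.exp (κ * (C - x)) * (-κ) * (Real.exp (κ * Cb) + Real.exp (κ * (C - x)))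
        - Real.exp (κ * (C - x)) * (Real.exp (κ * (C - x)) * (-κ))
        = -(κ * (Real.exp (κ * (C - x)) * Real.exp (κ * Cb))) := by ring
    rw [e1, e2]
    have q1 : 0 < κ * (Real.exp (κ * (V + x)) * Real.exp (κ * Vb))
        / (Real.exp (κ * Vb) + Real.exp (κ * (V + x))) ^ 2 := by positivity
    have q2 : 0 < κ * (Real.exp (κ * (C - x)) * Real.exp (κ * Cb))
        / (Real.exp (κ * Cb) + Real.exp (κ * (C - x))) ^ 2 := by positivity
    rw [neg_div]
    linarith
  -- the product form
  have hfP : ∀ x : ℝ, scalarObj κ Vb V Cb C x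
      = -(1 / κ) * Real.log ((Real.exp (κ * Vb) + Real.exp (κ * (V + x)))
          * (Real.exp (κ * Cb) + Real.exp (κ * (C - x)))) := by
    intro x
    rw [Real.log_mul (hA x).ne' (hB x).ne']
    unfold scalarObj; ring
  have hPexp : ∀ x : ℝ, (Real.exp (κ * Vb) + Real.exp (κ * (V + x)))
      * (Real.exp (κ * Cb) + Real.exp (κ * (C - x)))
      = Real.exp (κ * Vb + κ * Cb) + Real.exp (κ * V + κ * C)
        + (Real.exp (κ * Vb + κ * C - κ * x) + Real.exp (κ * V + κ * Cb + κ * x)) := by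
    intro x
    rw [add_mul, mul_add, mul_add, ← Real.exp_add, ← Real.exp_add, ← Real.exp_add,
      ← Real.exp_add]
    ring_nf
  have hm1 : Real.exp (κ * Vb + κ * C - κ * (((Vb - V) - (Cb - C)) / 2))
      = Real.exp (((κ * Vb + κ * C - κ * 0) + (κ * V + κ * Cb + κ * 0)) / 2) := by
    congr 1; ring
  have hm2 : Real.exp (κ * V + κ * Cb + κ * (((Vb - V) - (Cb - C)) / 2))
      = Real.exp (((κ * Vb + κ * C - κ * 0) + (κ * V + κ * Cb + κ * 0)) / 2) := by
    congr 1; ring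
  have hPle : ∀ y : ℝ, (Real.exp (κ * Vb) + Real.exp (κ * (V + ((Vb - V) - (Cb - C)) / 2)))
      * (Real.exp (κ * Cb) + Real.exp (κ * (C - ((Vb - V) - (Cb - C)) / 2)))
      ≤ (Real.exp (κ * Vb) + Real.exp (κ * (V + y)))
        * (Real.exp (κ * Cb) + Real.exp (κ * (C - y))) := by
    intro y
    rw [hPexp y, hPexp (((Vb - V) - (Cb - C)) / 2), hm1, hm2]
    have h := exp_add_exp_ge (κ * Vb + κ * C - κ * y) (κ * V + κ * Cb + κ * y)
    have hcg : Real.exp (((κ * Vb + κ * C - κ * 0) + (κ * V + κ * Cb + κ * 0)) / 2)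
        = Real.exp (((κ * Vb + κ * C - κ * y) + (κ * V + κ * Cb + κ * y)) / 2) := by
      congr 1; ring
    rw [hcg]
    linarith
  have hmax : ∀ y : ℝ, scalarObj κ Vb V Cb C y
      ≤ scalarObj κ Vb V Cb C (((Vb - V) - (Cb - C)) / 2) := by
    intro y
    rw [hfP y, hfP (((Vb - V) - (Cb - C)) / 2)]
    have hl : Real.log ((Real.exp (κ * Vb) + Real.exp (κ * (V + ((Vb - V) - (Cb - C)) / 2)))
          * (Real.exp (κ * Cb) + Real.exp (κ * (C - ((Vb - V) - (Cb - C)) / 2))))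
        ≤ Real.log ((Real.exp (κ * Vb) + Real.exp (κ * (V + y)))
          * (Real.exp (κ * Cb) + Real.exp (κ * (C - y)))) :=
      Real.log_le_log (mul_pos (hA _) (hB _)) (hPle y)
    have hpos : (0 : ℝ) < 1 / κ := by positivity
    nlinarith
  refine ⟨hconc, hmax, ?_⟩
  intro y hy
  have h1 : scalarObj κ Vb V Cb C (((Vb - V) - (Cb - C)) / 2) ≤ scalarObj κ Vb V Cb C y :=
    hy _
  have heq : scalarObj κ Vb V Cb C y = scalarObj κ Vb V Cb C (((Vb - V) - (Cb - C)) / 2) :=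
    le_antisymm (hmax y) h1
  rw [hfP y, hfP (((Vb - V) - (Cb - C)) / 2)] at heq
  have hne : -(1 / κ) ≠ 0 := by simp [hκ']
  have hlogeq := mul_left_cancel₀ hne heq
  have hPeq := congrArg Real.exp hlogeq
  rw [Real.exp_log (mul_pos (hA _) (hB _)), Real.exp_log (mul_pos (hA _) (hB _))] at hPeq
  rw [hPexp y, hPexp (((Vb - V) - (Cb - C)) / 2), hm1, hm2] at hPeq
  have hcg : Real.exp (((κ * Vb + κ * C - κ * 0) + (κ * V + κ * Cb + κ * 0)) / 2)
      = Real.exp (((κ * Vb + κ * C - κ * y) + (κ * V + κ * Cb + κ * y)) / 2) := by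
    congr 1; ring
  rw [hcg] at hPeq
  have hsum : Real.exp (κ * Vb + κ * C - κ * y) + Real.exp (κ * V + κ * Cb + κ * y)
      = 2 * Real.exp (((κ * Vb + κ * C - κ * y) + (κ * V + κ * Cb + κ * y)) / 2) := by
    linarith
  have hst := exp_add_exp_eq _ _ hsum
  have h3 : κ * ((Vb + C - V - Cb) - 2 * y) = 0 := by linear_combination hst
  rcases mul_eq_zero.mp h3 with h | h
  · exact absurd h hκ'
  · linarith
end

section
/- (Lemma 3) In the limit κ → ∞ the soft-minima become minima, and the function ĥ∞ : ℝ → ℝ defined by ĥ∞(x) = min_{a∈A_i} ⟨−û_i, Ξ(a)⟩ + min_{b∈B_j} ⟨−v̂_j, Ξ(b)⟩ (as a function of the single coordinate x = û_{i,j}^{(r)}, with v̂_{j,i}^{(r)} = −x and all other entries fixed) is maximized by every value x lying in the closed interval between (V̄∞ − V∞) and −(C̄∞ − C∞), where V̄∞ = −min_{a∈A_i, a_j≠r} ⟨−û_i, Ξ(a)⟩, V∞ = −min_{a∈A_i, a_j=r} ⟨−ũ_i, Ξ(ã)⟩, C̄∞ = −min_{b∈B_j, b_i≠r} ⟨−v̂_j,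 Ξ(b)⟩, and C∞ = −min_{b∈B_j, b_i=r} ⟨−ṽ_j, Ξ(b̃)⟩; that is, for every such x and every y ∈ ℝ, ĥ∞(y) ≤ ĥ∞(x). -/
attribute [local instance] Classical.propDecidable

noncomputable section

variable {R : Type*}

/-- The minimum of a (finite, nonempty) family of reals, as an infimum. -/
def fmin {L : Sort*} (z : L → ℝ) : ℝ := ⨅ l, z l

/-- `ĥ∞(x) = min_{a∈A_i} ⟨−û_i, Ξ(a)⟩ + min_{b∈B_j} ⟨−v̂_j, Ξ(b)⟩`, as a function of the single
coordinate `x = û_{i,j}^{(r)}` (with `v̂_{j,i}^{(r)} = −x`, all other entries fixed). -/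
def hhatInf [Ring R] [Fintype R] {m n : ℕ} (H : Matrix (Fin m) (Fin n) R)
    (j : Fin m) (i : Fin n) (hij : H j i ≠ 0) (r : R)
    (uh : Option (Jsupp H i) → {ρ : R // ρ ≠ 0} → ℝ)
    (vh : Isupp H j → {ρ : R // ρ ≠ 0} → ℝ) (x : ℝ) : ℝ :=
  fmin (fun a : Acode H i => ipXi (fun k ρ => -(uX uh ⟨j, hij⟩ r x k ρ)) a.val)
    + fmin (fun b : Bcode H j => ipXi (fun k ρ => -(vX vh ⟨i, hij⟩ r x k ρ)) b.val)

/-- `V̄∞ = −min_{a∈A_i, a_j≠r} ⟨−û_i, Ξ(a)⟩` (independent of the coordinate `x`). -/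
def VbarInf [Ring R] [Fintype R] {m n : ℕ} (H : Matrix (Fin m) (Fin n) R)
    (j : Fin m) (i : Fin n) (hij : H j i ≠ 0) (r : R)
    (uh : Option (Jsupp H i) → {ρ : R // ρ ≠ 0} → ℝ) : ℝ :=
  -(fmin (fun a : {a : Acode H i // a.val (some ⟨j, hij⟩) ≠ r} =>
      ipXi (fun k ρ => -(uh k ρ)) a.val.val))

/-- `V∞ = −min_{a∈A_i, a_j=r} ⟨−ũ_i, Ξ(ã)⟩`, the `j`-th block/entry being omitted. -/
def VsmInf [Ring R] [Fintype R] {m n : ℕ} (H : Matrix (Fin m) (Fin n) R)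
    (j : Fin m) (i : Fin n) (hij : H j i ≠ 0) (r : R)
    (uh : Option (Jsupp H i) → {ρ : R // ρ ≠ 0} → ℝ) : ℝ :=
  -(fmin (fun a : {a : Acode H i // a.val (some ⟨j, hij⟩) = r} =>
      ipXiE (fun k ρ => -(uh k ρ)) a.val.val (some ⟨j, hij⟩)))

/-- `C̄∞ = −min_{b∈B_j, b_i≠r} ⟨−v̂_j, Ξ(b)⟩` (independent of the coordinate `x`). -/
def CbarInf [Ring R] [Fintype R] {m n : ℕ} (H : Matrix (Fin m) (Fin n) R)
    (j : Fin m) (i : Fin n) (hij : H j i ≠ 0) (r : R)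
    (vh : Isupp H j → {ρ : R // ρ ≠ 0} → ℝ) : ℝ :=
  -(fmin (fun b : {b : Bcode H j // b.val ⟨i, hij⟩ ≠ r} =>
      ipXi (fun k ρ => -(vh k ρ)) b.val.val))

/-- `C∞ = −min_{b∈B_j, b_i=r} ⟨−ṽ_j, Ξ(b̃)⟩`, the `i`-th block/entry being omitted. -/
def CsmInf [Ring R] [Fintype R] {m n : ℕ} (H : Matrix (Fin m) (Fin n) R)
    (j : Fin m) (i : Fin n) (hij : H j i ≠ 0) (r : R)
    (vh : Isupp H j → {ρ : R // ρ ≠ 0} → ℝ) : ℝ :=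
  -(fmin (fun b : {b : Bcode H j // b.val ⟨i, hij⟩ = r} =>
      ipXiE (fun k ρ => -(vh k ρ)) b.val.val ⟨i, hij⟩))

section fminlemmas

lemma fmin_le {L : Sort*} [Finite L] (z : L → ℝ) (l : L) : fmin z ≤ z l :=
  ciInf_le (Set.finite_range z).bddBelow l

lemma le_fmin {L : Sort*} [Nonempty L] (z : L → ℝ) (c : ℝ) (h : ∀ l, c ≤ z l) :
    c ≤ fmin z := le_ciInf h

lemma fmin_split {L : Type*} [Finite L] (z : L → ℝ) (P : L → Prop)
    [Nonempty {l // P l}] [Nonempty {l // ¬ P l}] :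
    fmin z = min (fmin fun l : {l // P l} => z l.val)
      (fmin fun l : {l // ¬ P l} => z l.val) := by
  haveI : Nonempty L := ⟨(Classical.arbitrary {l // P l}).val⟩
  apply le_antisymm
  · exact le_min (le_fmin _ _ fun l => fmin_le z l.val)
      (le_fmin _ _ fun l => fmin_le z l.val)
  · apply le_fmin
    intro l
    by_cases hP : P l
    · exact le_trans (min_le_left _ _) (fmin_le (fun l : {l // P l} => z l.val) ⟨l, hP⟩)
    · exact le_trans (min_le_right _ _) (fmin_le (fun l : {l // ¬ P l} => z l.val) ⟨l, hP⟩)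

lemma fmin_const_add {L : Sort*} [Finite L] [Nonempty L] (c : ℝ) (z : L → ℝ) :
    fmin (fun l => c + z l) = c + fmin z := by
  have h1 : ∀ l, fmin (fun l => c + z l) ≤ c + z l := fun l => fmin_le _ l
  have h2 : fmin (fun l => c + z l) - c ≤ fmin z :=
    le_fmin _ _ fun l => by linarith [h1 l]
  have h3 := le_fmin (fun l => c + z l) (c + fmin z) fun l => by
    show c + fmin z ≤ c + z l; linarith [fmin_le z l]
  linarith

end fminlemmas

lemma sum_xi [Ring R] [Fintype R] (r : R) (hr : r ≠ 0) (f : {ρ : R // ρ ≠ 0} → ℝ) :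
    ∑ ρ, f ρ * xi r ρ = f ⟨r, hr⟩ := by
  unfold xi
  rw [Finset.sum_eq_single (⟨r, hr⟩ : {ρ : R // ρ ≠ 0})]
  · simp
  · intro b _ hb
    rw [if_neg (fun h => hb (Subtype.ext h)), mul_zero]
  · simp

lemma ipXi_A_eq [Ring R] [Fintype R] {m n : ℕ} {H : Matrix (Fin m) (Fin n) R}
    {j : Fin m} {i : Fin n} (hij : H j i ≠ 0) (r : R) (hr : r ≠ 0)
    (uh : Option (Jsupp H i) → {ρ : R // ρ ≠ 0} → ℝ) (x : ℝ)
    (a : Acode H i) (ha : a.val (some ⟨j, hij⟩) = r) :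
    ipXi (fun k ρ => -(uX uh ⟨j, hij⟩ r x k ρ)) a.val
      = -x + ipXiE (fun k ρ => -(uh k ρ)) a.val (some ⟨j, hij⟩) := by
  unfold ipXi ipXiE
  rw [← Finset.add_sum_erase _ _ (Finset.mem_univ (some (⟨j, hij⟩ : Jsupp H i)))]
  congr 1
  · rw [ha, sum_xi r hr]
    simp [uX]
  · apply Finset.sum_congr rfl
    intro k hk
    have hk' : k ≠ some ⟨j, hij⟩ := (Finset.mem_erase.mp hk).1
    apply Finset.sum_congr rfl
    intro ρ _
    simp [uX, hk']

lemma ipXi_A_ne [Ring R] [Fintype R] {m n : ℕ} {H : Matrix (Fin m) (Fin n) R}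
    {j : Fin m} {i : Fin n} (hij : H j i ≠ 0) (r : R)
    (uh : Option (Jsupp H i) → {ρ : R // ρ ≠ 0} → ℝ) (x : ℝ)
    (a : Acode H i) (ha : a.val (some ⟨j, hij⟩) ≠ r) :
    ipXi (fun k ρ => -(uX uh ⟨j, hij⟩ r x k ρ)) a.val
      = ipXi (fun k ρ => -(uh k ρ)) a.val := by
  unfold ipXi
  apply Finset.sum_congr rfl
  intro k _
  apply Finset.sum_congr rfl
  intro ρ _
  by_cases hk : k = some ⟨j, hij⟩
  · subst hk
    by_cases hρ : (ρ : R) = r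
    · have hz : xi (a.val (some ⟨j, hij⟩)) ρ = 0 := by
        unfold xi
        rw [if_neg (by rw [hρ]; exact fun h => ha h.symm)]
      rw [hz, mul_zero, mul_zero]
    · simp [uX, hρ]
  · simp [uX, hk]

lemma ipXi_B_eq [Ring R] [Fintype R] {m n : ℕ} {H : Matrix (Fin m) (Fin n) R}
    {j : Fin m} {i : Fin n} (hij : H j i ≠ 0) (r : R) (hr : r ≠ 0)
    (vh : Isupp H j → {ρ : R // ρ ≠ 0} → ℝ) (x : ℝ)
    (b : Bcode H j) (hb : b.val ⟨i, hij⟩ = r) :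
    ipXi (fun k ρ => -(vX vh ⟨i, hij⟩ r x k ρ)) b.val
      = x + ipXiE (fun k ρ => -(vh k ρ)) b.val ⟨i, hij⟩ := by
  unfold ipXi ipXiE
  rw [← Finset.add_sum_erase _ _ (Finset.mem_univ (⟨i, hij⟩ : Isupp H j))]
  congr 1
  · rw [hb, sum_xi r hr]
    simp [vX]
  · apply Finset.sum_congr rfl
    intro k hk
    have hk' : k ≠ ⟨i, hij⟩ := (Finset.mem_erase.mp hk).1
    apply Finset.sum_congr rfl
    intro ρ _
    simp [vX, hk']

lemma ipXi_B_ne [Ring R] [Fintype R] {m n : ℕ} {H : Matrix (Fin m) (Fin n) R}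
    {j : Fin m} {i : Fin n} (hij : H j i ≠ 0) (r : R)
    (vh : Isupp H j → {ρ : R // ρ ≠ 0} → ℝ) (x : ℝ)
    (b : Bcode H j) (hb : b.val ⟨i, hij⟩ ≠ r) :
    ipXi (fun k ρ => -(vX vh ⟨i, hij⟩ r x k ρ)) b.val
      = ipXi (fun k ρ => -(vh k ρ)) b.val := by
  unfold ipXi
  apply Finset.sum_congr rfl
  intro k _
  apply Finset.sum_congr rfl
  intro ρ _
  by_cases hk : k = ⟨i, hij⟩
  · subst hk
    by_cases hρ : (ρ : R) = r
    · have hz : xi (b.val ⟨i, hij⟩) ρ = 0 := by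
        unfold xi
        rw [if_neg (by rw [hρ]; exact fun h => hb h.symm)]
      rw [hz, mul_zero, mul_zero]
    · simp [vX, hρ]
  · simp [vX, hk]


lemma hhat_formula [Ring R] [Fintype R] {m n : ℕ} (H : Matrix (Fin m) (Fin n) R)
    (j : Fin m) (i : Fin n) (hij : H j i ≠ 0) (r : R) (hr : r ≠ 0)
    (uh : Option (Jsupp H i) → {ρ : R // ρ ≠ 0} → ℝ)
    (vh : Isupp H j → {ρ : R // ρ ≠ 0} → ℝ)
    (hB1 : Nonempty {b : Bcode H j // b.val ⟨i, hij⟩ = r})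
    (hB2 : Nonempty {b : Bcode H j // b.val ⟨i, hij⟩ ≠ r}) (x : ℝ) :
    hhatInf H j i hij r uh vh x
      = min (-VsmInf H j i hij r uh - x) (-VbarInf H j i hij r uh)
        + min (x - CsmInf H j i hij r vh) (-CbarInf H j i hij r vh) := by
  haveI nA1 : Nonempty {a : Acode H i // a.val (some ⟨j, hij⟩) = r} :=
    ⟨⟨⟨fun _ => r, fun _ _ => rfl⟩, rfl⟩⟩
  haveI nA2 : Nonempty {a : Acode H i // ¬ a.val (some ⟨j, hij⟩) = r} :=
    ⟨⟨⟨fun _ => 0, fun _ _ => rfl⟩, fun h => hr h.symm⟩⟩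
  haveI nB1 : Nonempty {b : Bcode H j // b.val ⟨i, hij⟩ = r} := hB1
  haveI nB2 : Nonempty {b : Bcode H j // ¬ b.val ⟨i, hij⟩ = r} := hB2
  have hA1 : fmin (fun l : {a : Acode H i // a.val (some ⟨j, hij⟩) = r} =>
      ipXi (fun k ρ => -(uX uh ⟨j, hij⟩ r x k ρ)) l.val.val)
      = -VsmInf H j i hij r uh - x := by
    have e : (fun l : {a : Acode H i // a.val (some ⟨j, hij⟩) = r} =>
        ipXi (fun k ρ => -(uX uh ⟨j, hij⟩ r x k ρ)) l.val.val)
        = fun l => -x + ipXiE (fun k ρ => -(uh k ρ)) l.val.val (some ⟨j, hij⟩) :=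
      funext fun l => ipXi_A_eq hij r hr uh x l.val l.prop
    rw [e, fmin_const_add (-x)
      (fun l : {a : Acode H i // a.val (some ⟨j, hij⟩) = r} =>
        ipXiE (fun k ρ => -(uh k ρ)) l.val.val (some ⟨j, hij⟩))]
    unfold VsmInf
    ring
  have hA2 : fmin (fun l : {a : Acode H i // ¬ a.val (some ⟨j, hij⟩) = r} =>
      ipXi (fun k ρ => -(uX uh ⟨j, hij⟩ r x k ρ)) l.val.val)
      = -VbarInf H j i hij r uh := by
    have e : (fun l : {a : Acode H i // ¬ a.val (some ⟨j, hij⟩) = r} =>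
        ipXi (fun k ρ => -(uX uh ⟨j, hij⟩ r x k ρ)) l.val.val)
        = fun l => ipXi (fun k ρ => -(uh k ρ)) l.val.val :=
      funext fun l => ipXi_A_ne hij r uh x l.val l.prop
    rw [e]
    unfold VbarInf
    ring
  have hB1' : fmin (fun l : {b : Bcode H j // b.val ⟨i, hij⟩ = r} =>
      ipXi (fun k ρ => -(vX vh ⟨i, hij⟩ r x k ρ)) l.val.val)
      = x - CsmInf H j i hij r vh := by
    have e : (fun l : {b : Bcode H j // b.val ⟨i, hij⟩ = r} =>
        ipXi (fun k ρ => -(vX vh ⟨i, hij⟩ r x k ρ)) l.val.val)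
        = fun l => x + ipXiE (fun k ρ => -(vh k ρ)) l.val.val ⟨i, hij⟩ :=
      funext fun l => ipXi_B_eq hij r hr vh x l.val l.prop
    rw [e, fmin_const_add x
      (fun l : {b : Bcode H j // b.val ⟨i, hij⟩ = r} =>
        ipXiE (fun k ρ => -(vh k ρ)) l.val.val ⟨i, hij⟩)]
    unfold CsmInf
    ring
  have hB2' : fmin (fun l : {b : Bcode H j // ¬ b.val ⟨i, hij⟩ = r} =>
      ipXi (fun k ρ => -(vX vh ⟨i, hij⟩ r x k ρ)) l.val.val)
      = -CbarInf H j i hij r vh := by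
    have e : (fun l : {b : Bcode H j // ¬ b.val ⟨i, hij⟩ = r} =>
        ipXi (fun k ρ => -(vX vh ⟨i, hij⟩ r x k ρ)) l.val.val)
        = fun l => ipXi (fun k ρ => -(vh k ρ)) l.val.val :=
      funext fun l => ipXi_B_ne hij r vh x l.val l.prop
    rw [e]
    unfold CbarInf
    ring
  unfold hhatInf
  rw [fmin_split (fun a : Acode H i =>
      ipXi (fun k ρ => -(uX uh ⟨j, hij⟩ r x k ρ)) a.val)
      (fun a => a.val (some ⟨j, hij⟩) = r),
    fmin_split (fun b : Bcode H j =>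
      ipXi (fun k ρ => -(vX vh ⟨i, hij⟩ r x k ρ)) b.val)
      (fun b => b.val ⟨i, hij⟩ = r)]
  exact congrArg₂ (· + ·) (congrArg₂ min hA1 hA2) (congrArg₂ min hB1' hB2')

lemma key_real (V v C c x y : ℝ)
    (hx : x ∈ Set.uIcc (V - v) (-(C - c))) :
    min (-v - y) (-V) + min (y - c) (-C) ≤ min (-v - x) (-V) + min (x - c) (-C) := by
  rcases Set.mem_uIcc.mp hx with ⟨h1, h2⟩ | ⟨h1, h2⟩
  · rw [show min (-v - x) (-V) = -v - x from min_eq_left (by linarith),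
      show min (x - c) (-C) = x - c from min_eq_left (by linarith)]
    have := min_le_left (-v - y) (-V); have := min_le_left (y - c) (-C); linarith
  · rw [show min (-v - x) (-V) = -V from min_eq_right (by linarith),
      show min (x - c) (-C) = -C from min_eq_right (by linarith)]
    have := min_le_right (-v - y) (-V); have := min_le_right (y - c) (-C); linarith


/-- (Lemma 3) In the limit `κ → ∞`, the function `ĥ∞` is maximized by every value `x` lying in
the closed interval between `V̄∞ − V∞` and `−(C̄∞ − C∞)`. -/
theorem hhatInf_max_interval [Ring R] [Fintype R] [DecidableEq R]
    (hq : 2 ≤ Fintype.card R) {m n : ℕ} (H : Matrix (Fin m) (Fin n) R)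
    (j : Fin m) (i : Fin n) (hij : H j i ≠ 0) (r : R) (hr : r ≠ 0)
    (uh : Option (Jsupp H i) → {ρ : R // ρ ≠ 0} → ℝ)
    (vh : Isupp H j → {ρ : R // ρ ≠ 0} → ℝ)
    (hcouple : ∀ ρ, uh (some ⟨j, hij⟩) ρ = -(vh ⟨i, hij⟩ ρ))
    (hB1 : Nonempty {b : Bcode H j // b.val ⟨i, hij⟩ = r})
    (hB2 : Nonempty {b : Bcode H j // b.val ⟨i, hij⟩ ≠ r}) :
    ∀ x ∈ Set.uIcc (VbarInf H j i hij r uh - VsmInf H j i hij r uh)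
        (-(CbarInf H j i hij r vh - CsmInf H j i hij r vh)),
      ∀ y : ℝ, hhatInf H j i hij r uh vh y ≤ hhatInf H j i hij r uh vh x := by
  intro x hx y
  rw [hhat_formula H j i hij r hr uh vh hB1 hB2 x,
    hhat_formula H j i hij r hr uh vh hB1 hB2 y]
  exact key_real _ _ _ _ x y hx
end
end
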